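/- arXiv:2304.04352 — 2 statements merged into one kernel-verified Lean document; each statement's English description precedes it below -/
import Mathlib

section
/- Let X be the degree 3 vector field X = (5xyz − y³ + 2z³) ∂/∂x + (−(3/2)x²y − (3/2)xz² + (9/2)y²z) ∂/∂y − 3xy² ∂/∂z. Then [1:0:0] is the unique singular point of X, the multiplicity of X at [1:0:0] equals 1, and the Milnor number of X at [1:0:0] equals 13 (equivalently, for the local representation f = −(3/2)y − (3/2)z² − (1/2)y²z + y⁴ − 2yz³ and g = −3y² − 5yz² + y³z − 2z⁴ one has I₀(f,g) = 13). -/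
open MvPolynomial Matrix

noncomputable section

abbrev SL3 := Matrix.SpecialLinearGroup (Fin 3) ℂ

abbrev VF3 := Fin 3 → MvPolynomial (Fin 3) ℂ

/-- A polynomial vector field as a map `ℂ³ → ℂ³`. -/
def vfFun (Xf : VF3) : (Fin 3 → ℂ) → (Fin 3 → ℂ) := fun v i => eval v (Xf i)

/-- `p` represents a singular point of `Xf`. -/
def IsSing (Xf : VF3) (p : Fin 3 → ℂ) : Prop := ∃ lam : ℂ, vfFun Xf p = lam • p

/-- `[1:0:0]` is the unique singular point of `Xf`. -/
def UniqueSingE0 (Xf : VF3) : Prop :=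
  IsSing Xf ![1, 0, 0] ∧
    ∀ p : Fin 3 → ℂ, p ≠ 0 → IsSing Xf p → ∃ c : ℂ, p = c • ![1, 0, 0]

/-- Dehomogenization at `x = 1`; the variables of the result are `y = X 0`, `z = X 1`. -/
def deh (p : MvPolynomial (Fin 3) ℂ) : MvPolynomial (Fin 2) ℂ :=
  aeval (![1, X 0, X 1] : Fin 3 → MvPolynomial (Fin 2) ℂ) p

/-- First polynomial of the local representation at `[1:0:0]`: `f = Q(1,y,z) - y·P(1,y,z)`. -/
def locF (Xf : VF3) : MvPolynomial (Fin 2) ℂ := deh (Xf 1) - X 0 * deh (Xf 0)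

/-- Second polynomial of the local representation at `[1:0:0]`: `g = R(1,y,z) - z·P(1,y,z)`. -/
def locG (Xf : VF3) : MvPolynomial (Fin 2) ℂ := deh (Xf 2) - X 1 * deh (Xf 0)

/-- Order of a polynomial: least total degree of a nonzero homogeneous component. -/
def ordP (h : MvPolynomial (Fin 2) ℂ) : ℕ :=
  sInf {n | homogeneousComponent n h ≠ 0}

/-- Multiplicity of the singular point `[1:0:0]`. -/
def multE0 (Xf : VF3) : ℕ := min (ordP (locF Xf)) (ordP (locG Xf))

/-- Polynomials in `y, z` that do not vanish at the origin. -/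
def S0 : Submonoid (MvPolynomial (Fin 2) ℂ) :=
  (nonZeroDivisors ℂ).comap
    (eval (fun _ => (0 : ℂ)) : MvPolynomial (Fin 2) ℂ →+* ℂ).toMonoidHom

/-- The local ring `O₀` of `ℂ²` at the origin. -/
abbrev O0 := Localization S0

/-- Intersection index at the origin. -/
def interIdx (f g : MvPolynomial (Fin 2) ℂ) : ℕ :=
  Module.finrank ℂ
    (O0 ⧸ Ideal.span {algebraMap (MvPolynomial (Fin 2) ℂ) O0 f,
      algebraMap (MvPolynomial (Fin 2) ℂ) O0 g})

/-- Action of `SL(3,ℂ)` by change of coordinates: `(g·X)(v) = g·X(g⁻¹·v)`. -/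
def act3 (g : SL3) (Xf : VF3) : VF3 := fun i =>
  ∑ j, ((g : Matrix (Fin 3) (Fin 3) ℂ) i j) •
    (aeval (fun k => ∑ l, (((g⁻¹ : SL3) : Matrix (Fin 3) (Fin 3) ℂ) k l) •
      (X l : MvPolynomial (Fin 3) ℂ)) (Xf j))

/-- Divergence of a polynomial vector field. -/
def divg (Xf : VF3) : MvPolynomial (Fin 3) ℂ := ∑ i, pderiv i (Xf i)

/-- Divergence-free representative of a degree 3 vector field: `X₀ = X - (1/5)(div X)·E`. -/
def nf3 (Xf : VF3) : VF3 := fun i => Xf i - (1 / 5 : ℂ) • (divg Xf * X i)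

/-- Orbit of the divergence-free representative, as polynomial maps `ℂ³ → ℂ³`. -/
def orbitF3 (Xf : VF3) : Set ((Fin 3 → ℂ) → Fin 3 → ℂ) :=
  {F | ∃ g : SL3, F = vfFun (act3 g (nf3 Xf))}

/-- `Xf` is unstable: `0` lies in the closure of the orbit of `X₀`. -/
def Unstable3 (Xf : VF3) : Prop :=
  (0 : (Fin 3 → ℂ) → Fin 3 → ℂ) ∈ closure (orbitF3 Xf)

def Semistable3 (Xf : VF3) : Prop := ¬ Unstable3 Xf

/-- `Xf` is stable: semistable, closed orbit, finite stabilizer. -/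
def Stable3 (Xf : VF3) : Prop :=
  Semistable3 Xf ∧ IsClosed (orbitF3 Xf) ∧
    {g : SL3 | act3 g (nf3 Xf) = nf3 Xf}.Finite

/-- A degree 3 foliation: components homogeneous of degree 3, not all zero. -/
def IsDeg3Fol (Xf : VF3) : Prop := (∀ i, (Xf i).IsHomogeneous 3) ∧ Xf ≠ 0



/-! ### Auxiliary material for `stmt1` -/

section Aux1

abbrev A2 := MvPolynomial (Fin 2) ℂ

/-- The explicit vector field of the theorem. -/
def XfE : VF3 := ![C (5 : ℂ) * X 0 * X 1 * X 2 - X 1 ^ 3 + C 2 * X 2 ^ 3,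
      -(C (3/2 : ℂ)) * X 0 ^ 2 * X 1 - C (3/2 : ℂ) * X 0 * X 2 ^ 2
        + C (9/2 : ℂ) * X 1 ^ 2 * X 2,
      -(C (3 : ℂ)) * X 0 * X 1 ^ 2]

lemma sing_e0 : IsSing XfE ![1, 0, 0] := by
  refine ⟨0, ?_⟩
  funext i
  fin_cases i <;> simp [vfFun, XfE]

lemma unique_sing : UniqueSingE0 XfE := by
  refine ⟨sing_e0, ?_⟩
  rintro p hp ⟨lam, hl⟩
  set x := p 0 with hxd
  set y := p 1 with hyd
  set z := p 2 with hzd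
  have h0 := congrFun hl 0
  have h1 := congrFun hl 1
  have h2 := congrFun hl 2
  simp [vfFun, XfE] at h0 h1 h2
  have hP : 5*x*y*z - y^3 + 2*z^3 = lam * x := by linear_combination h0
  have hQ : -(3/2)*x^2*y - (3/2)*x*z^2 + (9/2)*y^2*z = lam * y := by linear_combination h1
  have hR : -3*x*y^2 = lam * z := by linear_combination h2
  have hne : x ≠ 0 ∨ y ≠ 0 ∨ z ≠ 0 := by
    by_contra hc
    push_neg at hc
    apply hp
    funext i
    fin_cases i
    · exact hc.1
    · exact hc.2.1
    · exact hc.2.2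
  have E1 : -(3/2)*x^3*y - (3/2)*x^2*z^2 + (9/2)*x*y^2*z - 5*x*y^2*z + y^4 - 2*y*z^3 = 0 := by
    linear_combination x * hQ - y * hP
  have E2 : -3*x^2*y^2 - 5*x*y*z^2 + y^3*z - 2*z^4 = 0 := by
    linear_combination x * hR - z * hP
  have E3 : -3*x*y^3 + (3/2)*x^2*y*z + (3/2)*x*z^3 - (9/2)*y^2*z^2 = 0 := by
    linear_combination y * hR - z * hQ
  by_cases hx : x = 0
  · exfalso
    have e1 : y^4 - 2*y*z^3 = 0 := by
      linear_combination E1 + (3/2*x^2*y + 3/2*x*z^2 - 9/2*y^2*z + 5*y^2*z) * hx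
    have e2 : y^3*z - 2*z^4 = 0 := by
      linear_combination E2 + (3*x*y^2 + 5*y*z^2) * hx
    have e3 : y^2*z^2 = 0 := by
      linear_combination (-2/9) * E3 + (-2/3*y^3 + 1/3*x*y*z + 1/3*z^3) * hx
    have hyz : y = 0 ∨ z = 0 := by
      rcases mul_eq_zero.mp e3 with h | h
      · exact Or.inl (pow_eq_zero_iff (n := 2) (by norm_num) |>.mp h)
      · exact Or.inr (pow_eq_zero_iff (n := 2) (by norm_num) |>.mp h)
    have hy : y = 0 := by
      rcases hyz with hy | hz
      · exact hy
      · have h4 : y^4 = 0 := by linear_combination e1 + 2*y*z^2 * hz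
        exact pow_eq_zero_iff (n := 4) (by norm_num) |>.mp h4
    have hz : z = 0 := by
      have h4 : z^4 = 0 := by linear_combination (-1/2)*e2 + (1/2)*y^2*z * hy
      exact pow_eq_zero_iff (n := 4) (by norm_num) |>.mp h4
    rcases hne with h | h | h
    · exact h hx
    · exact h hy
    · exact h hz
  · have hxz13 : x * z^13 = 0 := by
      linear_combination
        ((1/9)*y*z^9 + (-1/3)*x*y^2*z^7 + (4/3)*x^2*z^8 + (10/9)*x^3*y*z^6
          + (-2/9)*x^4*y^2*z^4 + (2/3)*x^5*z^5 + (7/9)*x^6*y*z^3 + (-1/9)*x^7*y^2*z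
          + (2/9)*x^8*z^2 + (1/3)*x^9*y) * E1
        + ((-1/9)*y^2*z^8 + (-1/2)*x*z^9 + (1/3)*x*y^3*z^6 + (-1/6)*x^2*y*z^7
          + (-1/9)*x^3*y^2*z^5 + (-1)*x^4*z^6 + (2/9)*x^4*y^3*z^3 + (-1/9)*x^6*y^2*z^2
          + (-1/2)*x^7*z^3 + (1/9)*x^7*y^3 + (-1/18)*x^8*y*z + (-1/6)*x^10) * E2
    have hz0 : z = 0 := by
      rcases mul_eq_zero.mp hxz13 with h | h
      · exact absurd h hx
      · exact pow_eq_zero_iff (n := 13) (by norm_num) |>.mp h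
    have hy0 : y = 0 := by
      have h2 : x^2 * y^2 = 0 := by
        linear_combination (-1/3) * E2 + (-5/3*x*y*z + 1/3*y^3 - 2/3*z^3) * hz0
      rcases mul_eq_zero.mp h2 with h | h
      · exact absurd (pow_eq_zero_iff (n := 2) (by norm_num) |>.mp h) hx
      · exact pow_eq_zero_iff (n := 2) (by norm_num) |>.mp h
    refine ⟨x, ?_⟩
    funext i
    fin_cases i
    · show p 0 = x * 1
      rw [mul_one]
    · show p 1 = x * 0
      rw [mul_zero]; exact hy0
    · show p 2 = x * 0
      rw [mul_zero]; exact hz0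

/-! #### The local representation -/

def fP : A2 := C (-(3/2) : ℂ) * X 0 + C (-(3/2) : ℂ) * X 1^2 + C (-(1/2) : ℂ) * X 0^2 * X 1
  + X 0^4 + C (-2 : ℂ) * X 0 * X 1^3
def gP : A2 := C (-3 : ℂ) * X 0^2 + C (-5 : ℂ) * X 0 * X 1^2 + X 0^3 * X 1 + C (-2 : ℂ) * X 1^4

lemma hlocF : locF XfE = fP := by
  apply MvPolynomial.funext
  intro v
  simp [locF, deh, XfE, fP]
  ring

lemma hlocG : locG XfE = gP := by
  apply MvPolynomial.funext
  intro v
  simp [locG, deh, XfE, gP]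
  ring

/-! #### Multiplicity -/

lemma hc0f : homogeneousComponent 0 fP = 0 := by
  rw [homogeneousComponent_zero]
  have h : coeff 0 fP = constantCoeff fP := rfl
  rw [h]
  simp [fP]

lemma hc1f : homogeneousComponent 1 fP = C (-(3/2):ℂ) * X 0 := by
  have h1 : (C (-(3/2):ℂ) * X 0 : A2).IsHomogeneous 1 :=
    (isHomogeneous_C _ _).mul (isHomogeneous_X _ _)
  have h2 : (C (-(3/2):ℂ) * X 1^2 : A2).IsHomogeneous 2 :=
    (isHomogeneous_C _ _).mul ((isHomogeneous_X _ _).pow 2)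
  have h3 : (C (-(1/2):ℂ) * X 0^2 * X 1 : A2).IsHomogeneous 3 :=
    ((isHomogeneous_C _ _).mul ((isHomogeneous_X _ _).pow 2)).mul (isHomogeneous_X _ _)
  have h4 : (X 0^4 : A2).IsHomogeneous 4 := (isHomogeneous_X _ _).pow 4
  have h5 : (C (-2:ℂ) * X 0 * X 1^3 : A2).IsHomogeneous 4 :=
    ((isHomogeneous_C _ _).mul (isHomogeneous_X _ _)).mul ((isHomogeneous_X _ _).pow 3)
  rw [fP, _root_.map_add, _root_.map_add, _root_.map_add, _root_.map_add,
    homogeneousComponent_of_mem h1, homogeneousComponent_of_mem h2,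
    homogeneousComponent_of_mem h3, homogeneousComponent_of_mem h4,
    homogeneousComponent_of_mem h5]
  norm_num

lemma hc1f_ne : homogeneousComponent 1 fP ≠ 0 := by
  rw [hc1f]
  intro h
  have := congrArg (eval (fun _ => (1:ℂ))) h
  simp at this

lemma ordf : ordP fP = 1 := by
  have hne : {n | homogeneousComponent n fP ≠ 0}.Nonempty := ⟨1, hc1f_ne⟩
  have hmem := Nat.sInf_mem hne
  refine le_antisymm (Nat.sInf_le hc1f_ne) ?_
  rcases Nat.eq_zero_or_pos (sInf {n | homogeneousComponent n fP ≠ 0}) with h0 | h0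
  · exact ((h0 ▸ hmem) hc0f).elim
  · exact h0

lemma hc0g : homogeneousComponent 0 gP = 0 := by
  rw [homogeneousComponent_zero]
  have h : coeff 0 gP = constantCoeff gP := rfl
  rw [h]
  simp [gP]

lemma hc1g : homogeneousComponent 1 gP = 0 := by
  have h1 : (C (-3:ℂ) * X 0^2 : A2).IsHomogeneous 2 :=
    (isHomogeneous_C _ _).mul ((isHomogeneous_X _ _).pow 2)
  have h2 : (C (-5:ℂ) * X 0 * X 1^2 : A2).IsHomogeneous 3 :=
    ((isHomogeneous_C _ _).mul (isHomogeneous_X _ _)).mul ((isHomogeneous_X _ _).pow 2)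
  have h3 : (X 0^3 * X 1 : A2).IsHomogeneous 4 :=
    ((isHomogeneous_X _ _).pow 3).mul (isHomogeneous_X _ _)
  have h4 : (C (-2:ℂ) * X 1^4 : A2).IsHomogeneous 4 :=
    (isHomogeneous_C _ _).mul ((isHomogeneous_X _ _).pow 4)
  rw [gP, _root_.map_add, _root_.map_add, _root_.map_add,
    homogeneousComponent_of_mem h1, homogeneousComponent_of_mem h2,
    homogeneousComponent_of_mem h3, homogeneousComponent_of_mem h4]
  norm_num

lemma hc2g_ne : homogeneousComponent 2 gP ≠ 0 := by
  have h1 : (C (-3:ℂ) * X 0^2 : A2).IsHomogeneous 2 :=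
    (isHomogeneous_C _ _).mul ((isHomogeneous_X _ _).pow 2)
  have h2 : (C (-5:ℂ) * X 0 * X 1^2 : A2).IsHomogeneous 3 :=
    ((isHomogeneous_C _ _).mul (isHomogeneous_X _ _)).mul ((isHomogeneous_X _ _).pow 2)
  have h3 : (X 0^3 * X 1 : A2).IsHomogeneous 4 :=
    ((isHomogeneous_X _ _).pow 3).mul (isHomogeneous_X _ _)
  have h4 : (C (-2:ℂ) * X 1^4 : A2).IsHomogeneous 4 :=
    (isHomogeneous_C _ _).mul ((isHomogeneous_X _ _).pow 4)
  rw [gP, _root_.map_add, _root_.map_add, _root_.map_add,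
    homogeneousComponent_of_mem h1, homogeneousComponent_of_mem h2,
    homogeneousComponent_of_mem h3, homogeneousComponent_of_mem h4]
  norm_num

lemma ordg_ge : 1 ≤ ordP gP := by
  have hne : {n | homogeneousComponent n gP ≠ 0}.Nonempty := ⟨2, hc2g_ne⟩
  have hmem := Nat.sInf_mem hne
  rcases Nat.eq_zero_or_pos (sInf {n | homogeneousComponent n gP ≠ 0}) with h0 | h0
  · exact ((h0 ▸ hmem) hc0g).elim
  · exact h0

lemma multXfE : multE0 XfE = 1 := by
  rw [multE0, hlocF, hlocG, ordf]
  exact min_eq_left (ordg_ge)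

abbrev B := AdjoinRoot ((Polynomial.X : Polynomial ℂ) ^ 13)
def r : B := AdjoinRoot.root _
lemma hr13 : r ^ 13 = 0 := by
  calc r ^ 13 = Polynomial.aeval r ((Polynomial.X : Polynomial ℂ) ^ 13) := by
        simp [_root_.map_pow]
    _ = AdjoinRoot.mk _ ((Polynomial.X : Polynomial ℂ) ^ 13) := AdjoinRoot.aeval_eq _
    _ = 0 := AdjoinRoot.mk_self

def psiB : B := - r^2 + r^5 - (3 : B) * r^11
def Phihat : A2 →ₐ[ℂ] B := aeval ![psiB, r]
def psiX : Polynomial ℂ := - Polynomial.X^2 + Polynomial.X^5 - (3 : Polynomial ℂ) * Polynomial.X^11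
def sigmahat : A2 →ₐ[ℂ] Polynomial ℂ := aeval ![psiX, Polynomial.X]
def rho : Polynomial ℂ →ₐ[ℂ] A2 := Polynomial.aeval (X 1)
def tauh : A2 →ₐ[ℂ] A2 := rho.comp sigmahat

lemma hPhi_eq : Phihat = (Polynomial.aeval r).comp sigmahat := by
  apply MvPolynomial.algHom_ext
  intro i
  fin_cases i <;> simp [Phihat, sigmahat, psiX, psiB, r, _root_.map_ofNat]


def uP : A2 := X 0 + X 1^2 - X 1^5 + (3 : A2) * X 1^11

lemma htau0 : tauh (X 0) = X 0 - uP := by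
  simp [tauh, rho, sigmahat, psiX, uP, _root_.map_ofNat]
  ring

lemma htau1 : tauh (X 1) = X 1 := by simp [tauh, rho, sigmahat]

lemma sub_tau_mem (a : A2) : a - tauh a ∈ Ideal.span {uP} := by
  induction a using MvPolynomial.induction_on with
  | C c => simp [tauh, rho, sigmahat]
  | add p q hp hq =>
      have : p + q - tauh (p + q) = (p - tauh p) + (q - tauh q) := by
        rw [_root_.map_add]; ring
      rw [this]; exact add_mem hp hq
  | mul_X p i hp =>
      have : p * X i - tauh (p * X i) = (p - tauh p) * X i + tauh p * (X i - tauh (X i)) := by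
        rw [_root_.map_mul]; ring
      rw [this]
      refine add_mem (Ideal.mul_mem_right _ _ hp) ?_
      rcases (by omega : (i : ℕ) = 0 ∨ (i : ℕ) = 1) with h | h
      · have hi : i = 0 := Fin.ext h
        subst hi
        rw [htau0]
        have : (X 0 : A2) - (X 0 - uP) = uP := by ring
        rw [this]
        exact Ideal.mul_mem_left _ _ (Ideal.subset_span rfl)
      · have hi : i = 1 := Fin.ext h
        subst hi
        rw [htau1, sub_self, mul_zero]
        exact zero_mem _

lemma sub_eval0_mem (a : A2) :
    a - C (eval (fun _ => (0:ℂ)) a) ∈ Ideal.span {(X 0 : A2), X 1} := by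
  induction a using MvPolynomial.induction_on with
  | C c => simp
  | add p q hp hq =>
      have : p + q - C (eval (fun _ => (0:ℂ)) (p + q))
          = (p - C (eval (fun _ => (0:ℂ)) p)) + (q - C (eval (fun _ => (0:ℂ)) q)) := by
        rw [_root_.map_add, _root_.map_add]; ring
      rw [this]; exact add_mem hp hq
  | mul_X p i hp =>
      have : p * X i - C (eval (fun _ => (0:ℂ)) (p * X i)) = p * X i := by
        simp
      rw [this]
      refine Ideal.mul_mem_left _ _ ?_
      apply Ideal.subset_span
      fin_cases i <;> simp

lemma ker_Phihat {a : A2} (ha : Phihat a = 0) : a ∈ Ideal.span {uP, X 1 ^ 13} := by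
  rw [hPhi_eq] at ha
  simp only [AlgHom.comp_apply, r, AdjoinRoot.aeval_eq, AdjoinRoot.mk_eq_zero] at ha
  obtain ⟨c, hc⟩ := ha
  have h1 : a - tauh a ∈ Ideal.span {uP, X 1 ^ 13} := by
    refine Ideal.span_mono ?_ (sub_tau_mem a)
    intro x hx; rw [hx]; left; rfl
  have h2 : tauh a ∈ Ideal.span ({uP, X 1 ^ 13} : Set A2) := by
    have : tauh a = X 1 ^ 13 * rho c := by
      rw [tauh, AlgHom.comp_apply, hc, _root_.map_mul, _root_.map_pow]
      simp [rho]
    rw [this]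
    exact Ideal.mul_mem_right _ _ (Ideal.subset_span (by right; rfl))
  have : a = (a - tauh a) + tauh a := by ring
  rw [this]; exact add_mem h1 h2

lemma S0_unit (s : A2) (hs : s ∈ S0) : IsUnit (Phihat s) := by
  have hs0 : eval (fun _ => (0:ℂ)) s ≠ 0 := by
    have := hs
    simp only [S0, Submonoid.mem_comap, RingHom.toMonoidHom_eq_coe,
      MonoidHom.coe_coe] at this
    exact nonZeroDivisors.ne_zero this
  set c := eval (fun _ => (0:ℂ)) s with hc
  have hnil : IsNilpotent (Phihat s - algebraMap ℂ B c) := by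
    have hmem : Phihat s - algebraMap ℂ B c ∈ Ideal.span {r} := by
      have h0 : Phihat (s - C c) ∈ Ideal.map Phihat (Ideal.span {(X 0 : A2), X 1}) :=
        Ideal.mem_map_of_mem _ (sub_eval0_mem s)
      rw [Ideal.map_span, Set.image_insert_eq, Set.image_singleton] at h0
      have h1 : Phihat (X 0) = psiB := by simp [Phihat]
      have h2 : Phihat (X 1) = r := by simp [Phihat]
      rw [h1, h2] at h0
      have hsub : Ideal.span ({psiB, r} : Set B) ≤ Ideal.span {r} := by
        rw [Ideal.span_le]
        rintro x (rfl | rfl)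
        · have : psiB = r * (- r + r^4 - (3:B) * r^10) := by rw [psiB]; ring
          rw [this]
          exact Ideal.mul_mem_right _ _ (Ideal.subset_span rfl)
        · exact Ideal.subset_span rfl
      have := hsub h0
      have heq : Phihat (s - C c) = Phihat s - algebraMap ℂ B c := by
        rw [_root_.map_sub]; simp [Phihat]
      rwa [heq] at this
    rw [Ideal.mem_span_singleton] at hmem
    obtain ⟨b, hb⟩ := hmem
    exact ⟨13, by rw [hb, mul_pow, hr13, zero_mul]⟩
  have hu : IsUnit (algebraMap ℂ B c) := by
    refine isUnit_iff_exists_inv.2 ⟨algebraMap ℂ B c⁻¹, ?_⟩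
    rw [← _root_.map_mul, mul_inv_cancel₀ hs0, _root_.map_one]
  have : Phihat s = algebraMap ℂ B c + (Phihat s - algebraMap ℂ B c) := by ring
  rw [this]
  exact hnil.isUnit_add_left_of_commute hu (Commute.all _ _)


def Phi' : O0 →ₐ[ℂ] B :=
  IsLocalization.liftAlgHom (M := S0) (S := O0) (f := Phihat)
    (fun y => S0_unit y.1 y.2)

lemma Phi'_comp (a : A2) : Phi' (algebraMap A2 O0 a) = Phihat a := by
  simp [Phi', IsLocalization.liftAlgHom_apply, IsLocalization.lift_eq]

lemma Phi'_surj : Function.Surjective Phi' := by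
  intro b
  obtain ⟨p, rfl⟩ := AdjoinRoot.mk_surjective b
  refine ⟨algebraMap A2 O0 (rho p), ?_⟩
  rw [Phi'_comp, hPhi_eq]
  have hcomp : sigmahat (rho p) = p := by
    have : sigmahat.comp rho = AlgHom.id ℂ (Polynomial ℂ) := by
      apply Polynomial.algHom_ext
      simp [sigmahat, rho]
    calc sigmahat (rho p) = (sigmahat.comp rho) p := rfl
      _ = p := by rw [this]; rfl
  simp only [AlgHom.comp_apply, hcomp, r, AdjoinRoot.aeval_eq]


def FP : A2 := (3 : A2) * X 1 ^ 2 + (3 : A2) * X 0 + (4 : A2) * X 0 * X 1 ^ 3 + (1 : A2) * X 0 ^ 2 * X 1 + (-2 : A2) * X 0 ^ 4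
def GP : A2 := (2 : A2) * X 1 ^ 4 + (5 : A2) * X 0 * X 1 ^ 2 + (3 : A2) * X 0 ^ 2 + (-1 : A2) * X 0 ^ 3 * X 1
def auP : A2 := (6 : A2) + (-18 : A2) * X 1 ^ 3 + (-36 : A2) * X 1 ^ 6 + (-20 : A2) * X 0 * X 1 + (-30 : A2) * X 0 * X 1 ^ 4 + (-3 : A2) * X 0 * X 1 ^ 7 + (6 : A2) * X 0 ^ 2 * X 1 ^ 2 + (9 : A2) * X 0 ^ 2 * X 1 ^ 5
def buP : A2 := (18 : A2) * X 1 + (54 : A2) * X 1 ^ 4 + (27 : A2) * X 1 ^ 7 + (9 : A2) * X 0 * X 1 ^ 5 + (4 : A2) * X 0 ^ 2 + (6 : A2) * X 0 ^ 2 * X 1 ^ 3 + (6 : A2) * X 0 ^ 2 * X 1 ^ 6 + (-12 : A2) * X 0 ^ 3 * X 1 + (-18 : A2) * X 0 ^ 3 * X 1 ^ 4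
def azP : A2 := (-2 : A2) * X 1 ^ 2 + (-6 : A2) * X 1 ^ 5 + (-12 : A2) * X 1 ^ 8 + (-3 : A2) * X 0 + (-7 : A2) * X 0 * X 1 ^ 3 + (-10 : A2) * X 0 * X 1 ^ 6 + (-1 : A2) * X 0 * X 1 ^ 9 + (1 : A2) * X 0 ^ 2 * X 1 + (2 : A2) * X 0 ^ 2 * X 1 ^ 4 + (3 : A2) * X 0 ^ 2 * X 1 ^ 7
def bzP : A2 := (3 : A2) + (9 : A2) * X 1 ^ 3 + (18 : A2) * X 1 ^ 6 + (9 : A2) * X 1 ^ 9 + (1 : A2) * X 0 * X 1 + (3 : A2) * X 0 * X 1 ^ 7 + (2 : A2) * X 0 ^ 2 * X 1 ^ 2 + (2 : A2) * X 0 ^ 2 * X 1 ^ 5 + (2 : A2) * X 0 ^ 2 * X 1 ^ 8 + (-2 : A2) * X 0 ^ 3 + (-4 : A2) * X 0 ^ 3 * X 1 ^ 3 + (-6 : A2) * X 0 ^ 3 * X 1 ^ 6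
def cfuP : A2 := (3 : A2) + (3 : A2) * X 1 ^ 3 + (3 : A2) * X 1 ^ 6 + (-6 : A2) * X 1 ^ 9 + (3 : A2) * X 1 ^ 12 + (16 : A2) * X 1 ^ 15 + (-36 : A2) * X 1 ^ 18 + (18 : A2) * X 1 ^ 21 + (54 : A2) * X 1 ^ 24 + (-54 : A2) * X 1 ^ 27 + (54 : A2) * X 1 ^ 33 + (1 : A2) * X 0 * X 1 + (-2 : A2) * X 0 * X 1 ^ 4 + (4 : A2) * X 0 * X 1 ^ 7 + (-2 : A2) * X 0 * X 1 ^ 10 + (-12 : A2) * X 0 * X 1 ^ 13 + (12 : A2) * X 0 * X 1 ^ 16 + (-18 : A2) * X 0 * X 1 ^ 22 + (2 : A2) * X 0 ^ 2 * X 1 ^ 2 + (-2 : A2) * X 0 ^ 2 * X 1 ^ 5 + (6 : A2) * X 0 ^ 2 * X 1 ^ 11 + (-2 : A2) * X 0 ^ 3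
def cfzP : A2 := (-18 : A2) * X 1 + (-22 : A2) * X 1 ^ 4 + (70 : A2) * X 1 ^ 7 + (-63 : A2) * X 1 ^ 10 + (-84 : A2) * X 1 ^ 13 + (216 : A2) * X 1 ^ 16 + (-108 : A2) * X 1 ^ 19 + (-216 : A2) * X 1 ^ 22 + (216 : A2) * X 1 ^ 25 + (-162 : A2) * X 1 ^ 31
def cguP : A2 := (2 : A2) * X 1 ^ 2 + (2 : A2) * X 1 ^ 5 + (2 : A2) * X 1 ^ 8 + (-10 : A2) * X 1 ^ 11 + (-6 : A2) * X 1 ^ 14 + (6 : A2) * X 1 ^ 17 + (-9 : A2) * X 1 ^ 23 + (3 : A2) * X 0 + (1 : A2) * X 0 * X 1 ^ 3 + (-1 : A2) * X 0 * X 1 ^ 6 + (3 : A2) * X 0 * X 1 ^ 12 + (-1 : A2) * X 0 ^ 2 * X 1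
def cgzP : A2 := (6 : A2) + (-10 : A2) * X 1 ^ 3 + (-18 : A2) * X 1 ^ 6 + (36 : A2) * X 1 ^ 9 + (27 : A2) * X 1 ^ 12 + (-27 : A2) * X 1 ^ 15 + (27 : A2) * X 1 ^ 21

lemma cert_u : (18 : A2) * uP = auP * FP + buP * GP := by
  simp only [uP, FP, GP, auP, buP]; ring
lemma cert_z : (18 : A2) * X 1 ^ 13 = azP * FP + bzP * GP := by
  simp only [FP, GP, azP, bzP]; ring
lemma cert_F : FP = cfuP * uP + cfzP * X 1 ^ 13 := by
  simp only [uP, FP, cfuP, cfzP]; ring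
lemma cert_G : GP = cguP * uP + cgzP * X 1 ^ 13 := by
  simp only [uP, GP, cguP, cgzP]; ring

lemma C18 : (C ((18:ℂ)⁻¹) : A2) * 18 = 1 := by
  have h : ((18 : A2)) = C (18 : ℂ) := by simp [_root_.map_ofNat]
  rw [h, ← C_mul]
  norm_num

lemma mem_of_cert {t a b : A2} (h : (18 : A2) * t = a * FP + b * GP) :
    t ∈ Ideal.span ({FP, GP} : Set A2) := by
  have : t = C ((18:ℂ)⁻¹) * (a * FP + b * GP) := by
    rw [← h, ← mul_assoc, C18, one_mul]
  rw [this]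
  exact Ideal.mul_mem_left _ _ (add_mem
    (Ideal.mul_mem_left _ _ (Ideal.subset_span (by left; rfl)))
    (Ideal.mul_mem_left _ _ (Ideal.subset_span (by right; rfl))))

lemma span_uz_eq : Ideal.span ({uP, X 1 ^ 13} : Set A2) = Ideal.span {FP, GP} := by
  apply le_antisymm
  · rw [Ideal.span_le]
    rintro x (rfl | rfl)
    · exact mem_of_cert cert_u
    · exact mem_of_cert cert_z
  · rw [Ideal.span_le]
    rintro x (rfl | rfl)
    · rw [cert_F]
      exact add_mem
        (Ideal.mul_mem_left _ _ (Ideal.subset_span (by left; rfl)))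
        (Ideal.mul_mem_left _ _ (Ideal.subset_span (by right; rfl)))
    · rw [cert_G]
      exact add_mem
        (Ideal.mul_mem_left _ _ (Ideal.subset_span (by left; rfl)))
        (Ideal.mul_mem_left _ _ (Ideal.subset_span (by right; rfl)))

lemma Phihat_uP : Phihat uP = 0 := by
  simp only [uP, _root_.map_add, _root_.map_sub, _root_.map_mul, _root_.map_pow, _root_.map_ofNat, Phihat, aeval_X]
  show psiB + r^2 - r^5 + 3 * r^11 = 0
  rw [psiB]; ring

lemma Phihat_z13 : Phihat (X 1 ^ 13) = 0 := by
  have : Phihat (X 1 ^ 13) = r ^ 13 := by simp [Phihat]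
  rw [this, hr13]

lemma ker_Phi' : RingHom.ker Phi' = Ideal.map (algebraMap A2 O0) (Ideal.span {FP, GP}) := by
  apply le_antisymm
  · intro x hx
    obtain ⟨⟨a, s⟩, rfl⟩ := IsLocalization.mk'_surjective S0 x
    have hx0 : Phi' (IsLocalization.mk' O0 a s) = 0 := hx
    have ha : Phihat a = 0 := by
      have hrw : IsLocalization.mk' O0 a s
          = algebraMap A2 O0 a * IsLocalization.mk' O0 (1 : A2) s :=
        IsLocalization.mk'_eq_mul_mk'_one a s
      rw [hrw, _root_.map_mul] at hx0
      have hu : IsUnit (Phi' (IsLocalization.mk' O0 (1 : A2) s)) := by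
        refine (IsUnit.of_mul_eq_one (a := IsLocalization.mk' O0 (1 : A2) s)
          (algebraMap A2 O0 s.1) ?_).map Phi'
        rw [IsLocalization.mk'_spec, _root_.map_one]
      have h0 : Phi' ((algebraMap A2 O0) a) = 0 := hu.mul_left_eq_zero.mp hx0
      rw [← Phi'_comp a, h0]
    have haJ : a ∈ Ideal.span ({FP, GP} : Set A2) := by
      rw [← span_uz_eq]; exact ker_Phihat ha
    have : IsLocalization.mk' O0 a s
        = IsLocalization.mk' O0 (1 : A2) s * algebraMap A2 O0 a := by
      rw [mul_comm, ← IsLocalization.mk'_eq_mul_mk'_one]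
    show IsLocalization.mk' O0 a s ∈ _
    rw [this]
    exact Ideal.mul_mem_left _ _ (Ideal.mem_map_of_mem _ haJ)
  · rw [Ideal.map_le_iff_le_comap, Ideal.span_le]
    rintro x (rfl | rfl)
    · show Phi' (algebraMap A2 O0 FP) = 0
      rw [Phi'_comp, cert_F, _root_.map_add, _root_.map_mul, _root_.map_mul, Phihat_uP, Phihat_z13]
      ring
    · show Phi' (algebraMap A2 O0 GP) = 0
      rw [Phi'_comp, cert_G, _root_.map_add, _root_.map_mul, _root_.map_mul, Phihat_uP, Phihat_z13]
      ring

lemma finrank_B : Module.finrank ℂ B = 13 := by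
  rw [(AdjoinRoot.powerBasis (K := ℂ) (f := Polynomial.X ^ 13)
    (pow_ne_zero 13 Polynomial.X_ne_zero)).finrank]
  rw [AdjoinRoot.powerBasis_dim, Polynomial.natDegree_X_pow]

lemma final : Module.finrank ℂ
    (O0 ⧸ Ideal.map (algebraMap A2 O0) (Ideal.span ({FP, GP} : Set A2))) = 13 := by
  rw [← ker_Phi']
  have e := Ideal.quotientKerAlgEquivOfSurjective (f := Phi') Phi'_surj
  exact e.toLinearEquiv.finrank_eq.trans finrank_B


lemma f_FG : fP = C (-(1/2) : ℂ) * FP := by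
  apply MvPolynomial.funext
  intro v
  simp [fP, FP]
  ring

lemma F_fg : FP = C (-2 : ℂ) * fP := by
  apply MvPolynomial.funext
  intro v
  simp [fP, FP]
  ring

lemma g_G : gP = C (-1 : ℂ) * GP := by
  apply MvPolynomial.funext
  intro v
  simp [gP, GP]
  ring

lemma G_g : GP = C (-1 : ℂ) * gP := by
  apply MvPolynomial.funext
  intro v
  simp [gP, GP]
  ring

lemma span_fg : Ideal.span ({fP, gP} : Set A2) = Ideal.span {FP, GP} := by
  apply le_antisymm <;> rw [Ideal.span_le] <;> rintro x (rfl | rfl)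
  · rw [f_FG]
    exact Ideal.mul_mem_left _ _ (Ideal.subset_span (by left; rfl))
  · rw [g_G]
    exact Ideal.mul_mem_left _ _ (Ideal.subset_span (by right; rfl))
  · rw [F_fg]
    exact Ideal.mul_mem_left _ _ (Ideal.subset_span (by left; rfl))
  · rw [G_g]
    exact Ideal.mul_mem_left _ _ (Ideal.subset_span (by right; rfl))

lemma finrank_congr {I J : Ideal O0} (h : I = J) :
    Module.finrank ℂ (O0 ⧸ I) = Module.finrank ℂ (O0 ⧸ J) := by
  subst h; rfl

lemma interIdx_final : interIdx fP gP = 13 := by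
  rw [interIdx]
  refine (finrank_congr ?_).trans final
  rw [← span_fg, Ideal.map_span, Set.image_insert_eq, Set.image_singleton]

end Aux1


/-- The foliation `X = (5xyz - y³ + 2z³)∂x + (-(3/2)x²y - (3/2)xz² + (9/2)y²z)∂y - 3xy²∂z`
has `[1:0:0]` as its unique singular point, of multiplicity 1 and Milnor number 13. -/
theorem stmt1 (Xf : VF3)
    (hXf : Xf = ![C (5 : ℂ) * X 0 * X 1 * X 2 - X 1 ^ 3 + C 2 * X 2 ^ 3,
      -(C (3/2 : ℂ)) * X 0 ^ 2 * X 1 - C (3/2 : ℂ) * X 0 * X 2 ^ 2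
        + C (9/2 : ℂ) * X 1 ^ 2 * X 2,
      -(C (3 : ℂ)) * X 0 * X 1 ^ 2]) :
    UniqueSingE0 Xf ∧ multE0 Xf = 1 ∧ interIdx (locF Xf) (locG Xf) = 13 := by
  have hXf' : Xf = XfE := hXf
  subst hXf'
  exact ⟨unique_sing, multXfE, by rw [hlocF, hlocG]; exact interIdx_final⟩

end
end

section
/- Let X be the degree 3 vector field X = (y³ + y²z − yz² + z³) ∂/∂x + z³ ∂/∂y. Then [1:0:0] is the unique singular point of X, the multiplicity of X at [1:0:0] equals 3, and the Milnor number of X at [1:0:0] equals 13 (equivalently, for the local representation f = −y⁴ − y³z + y²z² − yz³ + z³ and g = −y³z − y²z² + yz³ − z⁴ one has I₀(f,g) = 13). -/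
open MvPolynomial Matrix

noncomputable section

/-! ### Auxiliary development -/

namespace FolAux

abbrev R2 := MvPolynomial (Fin 2) ℂ

/-- The first local polynomial `f = z³ - y⁴ - y³z + y²z² - yz³`. -/
def fP : R2 := X 1 ^ 3 - X 0 ^ 4 - X 0 ^ 3 * X 1 + X 0 ^ 2 * X 1 ^ 2 - X 0 * X 1 ^ 3

/-- The second local polynomial `g = -y³z - y²z² + yz³ - z⁴`. -/
def gP : R2 := -(X 0 ^ 3 * X 1) - X 0 ^ 2 * X 1 ^ 2 + X 0 * X 1 ^ 3 - X 1 ^ 4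

lemma locF_eq (Xf : VF3)
    (hXf : Xf = ![X 1 ^ 3 + X 1 ^ 2 * X 2 - X 1 * X 2 ^ 2 + X 2 ^ 3, X 2 ^ 3, 0]) :
    locF Xf = fP := by
  subst hXf
  simp only [locF, deh, fP, Matrix.cons_val_one, Matrix.cons_val_zero, Matrix.head_cons,
    map_add, map_sub, _root_.map_mul, map_pow, aeval_X, Matrix.cons_val_two, Matrix.tail_cons]
  ring

lemma locG_eq (Xf : VF3)
    (hXf : Xf = ![X 1 ^ 3 + X 1 ^ 2 * X 2 - X 1 * X 2 ^ 2 + X 2 ^ 3, X 2 ^ 3, 0]) :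
    locG Xf = gP := by
  subst hXf
  simp only [locG, deh, gP, Matrix.cons_val_one, Matrix.cons_val_zero, Matrix.head_cons,
    map_add, map_sub, _root_.map_mul, map_pow, aeval_X, Matrix.cons_val_two, Matrix.tail_cons,
    map_zero]
  ring

lemma uniqueSing (Xf : VF3)
    (hXf : Xf = ![X 1 ^ 3 + X 1 ^ 2 * X 2 - X 1 * X 2 ^ 2 + X 2 ^ 3, X 2 ^ 3, 0]) :
    UniqueSingE0 Xf := by
  subst hXf
  constructor
  · refine ⟨0, ?_⟩
    funext i
    fin_cases i <;> simp [vfFun]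
  · rintro p hp ⟨lam, hsing⟩
    have h0 := congrFun hsing 0
    have h1 := congrFun hsing 1
    have h2 := congrFun hsing 2
    simp only [vfFun, Matrix.cons_val_zero, Matrix.cons_val_one, Matrix.head_cons,
      Matrix.cons_val_two, Matrix.tail_cons, Pi.smul_apply, smul_eq_mul,
      map_add, map_sub, _root_.map_mul, map_pow, eval_X, map_zero] at h0 h1 h2
    have hz : p 2 = 0 := by
      rcases eq_or_ne lam 0 with h | h
      · have : p 2 ^ 3 = 0 := by rw [h1, h]; ring
        exact pow_eq_zero_iff (by norm_num) |>.mp this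
      · have : lam * p 2 = 0 := h2.symm
        exact (mul_eq_zero.mp this).resolve_left h
    have hy : p 1 = 0 := by
      rcases eq_or_ne lam 0 with h | h
      · rw [hz, h] at h0
        have h13 : p 1 ^ 3 = 0 := by linear_combination h0
        exact pow_eq_zero_iff (by norm_num) |>.mp h13
      · have : lam * p 1 = 0 := by rw [← h1, hz]; ring
        exact (mul_eq_zero.mp this).resolve_left h
    refine ⟨p 0, ?_⟩
    funext i
    fin_cases i <;> simp [hy, hz]


lemma fP_ne_zero : fP ≠ 0 := by
  intro h
  have := congrArg (eval (fun _ => (1 : ℂ))) h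
  simp [fP] at this

lemma gP_ne_zero : gP ≠ 0 := by
  intro h
  have := congrArg (eval (fun _ => (1 : ℂ))) h
  simp [gP] at this
  norm_num at this

lemma fP_split : fP = (X 1 ^ 3 : R2) +
    (- (X 0 ^ 4) - X 0 ^ 3 * X 1 + X 0 ^ 2 * X 1 ^ 2 - X 0 * X 1 ^ 3) := by
  rw [fP]; ring

lemma f3_hom : ((X 1 ^ 3 : R2)).IsHomogeneous 3 := (isHomogeneous_X _ _).pow 3

lemma f4_hom : ((- (X 0 ^ 4) - X 0 ^ 3 * X 1 + X 0 ^ 2 * X 1 ^ 2 - X 0 * X 1 ^ 3 : R2)).IsHomogeneous 4 := by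
  apply MvPolynomial.IsHomogeneous.sub
  apply MvPolynomial.IsHomogeneous.add
  apply MvPolynomial.IsHomogeneous.sub
  · exact ((isHomogeneous_X _ _).pow 4).neg
  · exact ((isHomogeneous_X _ _).pow 3).mul (isHomogeneous_X _ _)
  · exact ((isHomogeneous_X _ _).pow 2).mul ((isHomogeneous_X _ _).pow 2)
  · exact (isHomogeneous_X _ _).mul ((isHomogeneous_X _ _).pow 3)

lemma gP_hom : (gP).IsHomogeneous 4 := by
  rw [gP]
  apply MvPolynomial.IsHomogeneous.sub
  apply MvPolynomial.IsHomogeneous.add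
  apply MvPolynomial.IsHomogeneous.sub
  · exact (((isHomogeneous_X _ _).pow 3).mul (isHomogeneous_X _ _)).neg
  · exact ((isHomogeneous_X _ _).pow 2).mul ((isHomogeneous_X _ _).pow 2)
  · exact (isHomogeneous_X _ _).mul ((isHomogeneous_X _ _).pow 3)
  · exact (isHomogeneous_X _ _).pow 4

lemma hcomp {n m : ℕ} {p : R2} (h : p.IsHomogeneous n) :
    homogeneousComponent m p = if m = n then p else 0 :=
  homogeneousComponent_of_mem ((mem_homogeneousSubmodule _ _).2 h)

lemma hc_fP (n : ℕ) : homogeneousComponent n fP =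
    if n = 3 then (X 1 ^ 3 : R2) else if n = 4 then
      (- (X 0 ^ 4) - X 0 ^ 3 * X 1 + X 0 ^ 2 * X 1 ^ 2 - X 0 * X 1 ^ 3 : R2) else 0 := by
  rw [fP_split, map_add, hcomp f3_hom, hcomp f4_hom]
  rcases eq_or_ne n 3 with h | h
  · subst h; norm_num
  · rcases eq_or_ne n 4 with h4 | h4
    · subst h4; norm_num
    · simp [h, h4]

lemma ordP_fP : ordP fP = 3 := by
  have h3 : 3 ∈ {n | homogeneousComponent n fP ≠ 0} := by
    simp only [Set.mem_setOf_eq, hc_fP]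
    norm_num
  refine le_antisymm (Nat.sInf_le h3) ?_
  refine le_csInf ⟨3, h3⟩ ?_
  intro n hn
  by_contra hlt
  push_neg at hlt
  apply hn
  simp only [Set.mem_setOf_eq] at hn
  rw [hc_fP]
  interval_cases n <;> norm_num

lemma ordP_gP : ordP gP = 4 := by
  have hgc : ∀ n, homogeneousComponent n gP = if n = 4 then gP else 0 :=
    fun n => hcomp gP_hom
  have h4 : 4 ∈ {n | homogeneousComponent n gP ≠ 0} := by
    simp only [Set.mem_setOf_eq, hgc]
    simpa using gP_ne_zero
  refine le_antisymm (Nat.sInf_le h4) ?_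
  refine le_csInf ⟨4, h4⟩ ?_
  intro n hn
  by_contra hlt
  push_neg at hlt
  apply hn
  rw [hgc]
  simp [Nat.ne_of_lt hlt]

lemma multE0_eq (Xf : VF3)
    (hXf : Xf = ![X 1 ^ 3 + X 1 ^ 2 * X 2 - X 1 * X 2 ^ 2 + X 2 ^ 3, X 2 ^ 3, 0]) :
    multE0 Xf = 3 := by
  rw [multE0, locF_eq Xf hXf, locG_eq Xf hXf, ordP_fP, ordP_gP]
  norm_num


/-! ### Part 3: the intersection index -/

/-- The ideal `J = (f, g)` in `ℂ[y,z]`. -/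
def JI : Ideal R2 := Ideal.span {fP, gP}

lemma X1_pow4_mem : (X 1 : R2) ^ 4 ∈ JI :=
  Ideal.mem_span_pair.mpr ⟨X 1, -(X 0), by rw [fP, gP]; ring⟩

lemma X0_pow7_mem : (X 0 : R2) ^ 7 ∈ JI := by
  refine Ideal.mem_span_pair.mpr
    ⟨-13 * (X 0^2*X 1^2) + 11 * (X 0*X 1^3) - 7 * (X 1^4) - X 0^3 - X 0^2*X 1
      + X 0*X 1^2 - X 1^3,
     13 * (X 0^3*X 1) - 11 * (X 0^2*X 1^2) + 7 * (X 0*X 1^3) + 2 * (X 0^3)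
      - 3 * (X 0^2*X 1) + 5 * (X 0*X 1^2) - 7 * (X 1^3) - X 1^2, ?_⟩
  rw [fP, gP]
  ring

/-- Multiplication-by-`y` matrix on `ℂ[y,z]/J` in the standard monomial basis (over `ℤ`). -/
def MyZ : Matrix (Fin 13) (Fin 13) ℤ := !![0, 0, 0, 0, 0, 0, 0, 0, 0, 0, 0, 0, 0;
  1, 0, 0, 0, 0, 0, 0, 0, 0, 0, 0, 0, 0;
  0, 1, 0, 0, 0, 0, 0, 0, 0, 0, 0, 0, 0;
  0, 0, 1, 0, 0, 0, 0, 0, 0, 0, 0, 0, 0;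
  0, 0, 0, 0, 0, 0, 0, 0, 0, 0, 0, 0, 0;
  0, 0, 0, 0, 1, 0, 0, 0, 0, 0, 0, 0, 0;
  0, 0, 0, 0, 0, 1, 0, 0, 0, 0, 0, 0, 0;
  0, 0, 0, 0, 0, 0, 0, 0, 0, 0, 0, 0, 0;
  0, 0, 0, 0, 0, 0, 0, 1, 0, 0, 0, 0, 0;
  0, 0, 0, 2, 0, 0, -1, 0, 1, 0, 0, 0, 0;
  0, 0, 0, 1, 0, 0, 0, 0, 0, 0, 0, 0, 0;
  0, 0, 0, -2, 0, 0, 1, 0, 0, 0, 1, 0, 0;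
  0, 0, 0, 0, 0, 0, 0, 0, 0, -1, 0, 1, 0]

/-- Multiplication-by-`z` matrix on `ℂ[y,z]/J` in the standard monomial basis (over `ℤ`). -/
def MzZ : Matrix (Fin 13) (Fin 13) ℤ := !![0, 0, 0, 0, 0, 0, 0, 0, 0, 0, 0, 0, 0;
  0, 0, 0, 0, 0, 0, 0, 0, 0, 0, 0, 0, 0;
  0, 0, 0, 0, 0, 0, 0, 0, 0, 0, 0, 0, 0;
  0, 0, 0, 0, 0, 0, 0, 0, 0, 0, 0, 0, 0;
  1, 0, 0, 0, 0, 0, 0, 0, 0, 0, 0, 0, 0;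
  0, 1, 0, 0, 0, 0, 0, 0, 0, 0, 0, 0, 0;
  0, 0, 1, 0, 0, 0, 0, 0, 0, 0, 0, 0, 0;
  0, 0, 0, 0, 1, 0, 0, 0, 0, 0, 0, 0, 0;
  0, 0, 0, 0, 0, 1, 0, 0, 0, 0, 0, 0, 0;
  0, 0, 0, -1, 0, 0, 1, 0, 0, 0, 0, 0, 0;
  0, 0, 0, 0, 0, 0, 0, 1, 0, 0, 0, 0, 0;
  0, 0, 0, 1, 0, 0, 0, 0, 1, 0, 0, 0, 0;
  0, 0, 0, 0, 0, 0, 0, 0, 0, 1, 0, 0, 0]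

lemma hcommZ : MyZ * MzZ = MzZ * MyZ := by decide

set_option maxHeartbeats 4000000 in
lemma hfZ : MzZ^3 - MyZ^4 - MyZ^3*MzZ + MyZ^2*MzZ^2 - MyZ*MzZ^3 = 0 := by decide

set_option maxHeartbeats 4000000 in
lemma hgZ : -(MyZ^3*MzZ) - MyZ^2*MzZ^2 + MyZ*MzZ^3 - MzZ^4 = 0 := by decide

abbrev MatC := Matrix (Fin 13) (Fin 13) ℂ

/-- Coefficient-wise `ℤ → ℂ` on matrices, as a ring hom. -/
def ι : Matrix (Fin 13) (Fin 13) ℤ →+* MatC := (Int.castRingHom ℂ).mapMatrix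

def MyC : MatC := ι MyZ
def MzC : MatC := ι MzZ

lemma hcommC : MyC * MzC = MzC * MyC := by
  rw [MyC, MzC, ← _root_.map_mul, ← _root_.map_mul, hcommZ]

lemma hfC : MzC^3 - MyC^4 - MyC^3*MzC + MyC^2*MzC^2 - MyC*MzC^3 = 0 := by
  have := congrArg ι hfZ
  simpa only [map_sub, map_add, _root_.map_mul, map_pow, map_zero, MyC, MzC] using this

lemma hgC : -(MyC^3*MzC) - MyC^2*MzC^2 + MyC*MzC^3 - MzC^4 = 0 := by
  have := congrArg ι hgZ
  simpa only [map_sub, map_add, map_neg, _root_.map_mul, map_pow, map_zero, MyC, MzC] using this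

/-- The (commutative) subalgebra generated by the two commuting matrices. -/
abbrev adjYZ : Subalgebra ℂ MatC := Algebra.adjoin ℂ ({MyC, MzC} : Set MatC)

lemma hGenComm : ∀ a ∈ ({MyC, MzC} : Set MatC), ∀ b ∈ ({MyC, MzC} : Set MatC),
    a * b = b * a := by
  intro a ha b hb
  simp only [Set.mem_insert_iff, Set.mem_singleton_iff] at ha hb
  rcases ha with rfl | rfl <;> rcases hb with rfl | rfl <;>
    first | rfl | rw [hcommC]

noncomputable instance : CommRing adjYZ := Algebra.adjoinCommRingOfComm ℂ hGenComm

def MyA : adjYZ := ⟨MyC, Algebra.subset_adjoin (by simp)⟩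
def MzA : adjYZ := ⟨MzC, Algebra.subset_adjoin (by simp)⟩

/-- Evaluation of polynomials at the pair of commuting matrices `MyC, MzC`. -/
noncomputable def Em : MvPolynomial (Fin 2) ℂ →ₐ[ℂ] MatC :=
  (Subalgebra.val adjYZ).comp (aeval ![MyA, MzA])

lemma Em_X0 : Em (X 0) = MyC := by
  simp [Em, aeval_X]
  rfl

lemma Em_X1 : Em (X 1) = MzC := by
  simp [Em, aeval_X]
  rfl

lemma Em_fP : Em fP = 0 := by
  rw [fP]
  simp only [map_sub, map_add, _root_.map_mul, map_pow, Em_X0, Em_X1]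
  exact hfC

lemma Em_gP : Em gP = 0 := by
  rw [gP]
  simp only [map_sub, map_add, map_neg, _root_.map_mul, map_pow, Em_X0, Em_X1]
  exact hgC

lemma Em_JI {p : R2} (hp : p ∈ JI) : Em p = 0 := by
  obtain ⟨a, b, rfl⟩ := Ideal.mem_span_pair.mp hp
  rw [map_add, _root_.map_mul, _root_.map_mul, Em_fP, Em_gP, mul_zero, mul_zero, add_zero]


/-! ### The standard monomial basis of `ℂ[y,z]/J` -/

def stdA : Fin 13 → ℕ := ![0,1,2,3,0,1,2,0,1,2,0,1,2]
def stdB : Fin 13 → ℕ := ![0,0,0,0,1,1,1,2,2,2,3,3,3]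

def stdM : Fin 13 → R2 := fun j => X 0 ^ stdA j * X 1 ^ stdB j

set_option maxHeartbeats 4000000 in
lemma colZ : ∀ j i : Fin 13, (MyZ ^ stdA j * MzZ ^ stdB j) i 0
    = if i = j then 1 else 0 := by decide

lemma Em_stdM (j : Fin 13) : Em (stdM j) = MyC ^ stdA j * MzC ^ stdB j := by
  rw [stdM, _root_.map_mul, map_pow, map_pow, Em_X0, Em_X1]

lemma colC (j i : Fin 13) : (Em (stdM j)) i 0 = if i = j then 1 else 0 := by
  have h : Em (stdM j) = ι (MyZ ^ stdA j * MzZ ^ stdB j) := by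
    rw [Em_stdM, _root_.map_mul, map_pow, map_pow]; rfl
  rw [h]
  have : (ι (MyZ ^ stdA j * MzZ ^ stdB j)) i 0
      = (((MyZ ^ stdA j * MzZ ^ stdB j) i 0 : ℤ) : ℂ) := rfl
  rw [this, colZ j i]
  split <;> norm_num

/-- The linear functional `R2 → ℂ¹³` reading off normal-form coordinates. -/
noncomputable def φcoord : R2 →ₗ[ℂ] (Fin 13 → ℂ) where
  toFun p := fun i => (Em p) i 0
  map_add' p q := by
    funext i
    show (Em (p + q)) i 0 = (Em p) i 0 + (Em q) i 0
    rw [map_add]; rfl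
  map_smul' c p := by
    funext i
    show (Em (c • p)) i 0 = c • ((Em p) i 0)
    rw [_root_.map_smul]; rfl

lemma φcoord_stdM (j i : Fin 13) : φcoord (stdM j) i = if i = j then 1 else 0 := colC j i

lemma φcoord_JI {p : R2} (hp : p ∈ JI) : φcoord p = 0 := by
  have : Em p = 0 := Em_JI hp
  funext i
  simp [φcoord, this]

lemma li_std : LinearIndependent ℂ (fun j => Ideal.Quotient.mkₐ ℂ JI (stdM j)) := by
  rw [Fintype.linearIndependent_iff]
  intro c hc j
  have hc' : Ideal.Quotient.mkₐ ℂ JI (∑ i, c i • stdM i) = 0 := by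
    rw [map_sum]
    simpa only [_root_.map_smul] using hc
  have hmem : (∑ i, c i • stdM i) ∈ JI := by
    rwa [Ideal.Quotient.mkₐ_eq_mk, Ideal.Quotient.eq_zero_iff_mem] at hc'
  have h0 := congrFun (φcoord_JI hmem) j
  rw [map_sum] at h0
  simp only [_root_.map_smul, Finset.sum_apply, Pi.smul_apply, Pi.zero_apply,
    smul_eq_mul] at h0
  have hcongr : ∑ i, c i * φcoord (stdM i) j = ∑ i, c i * (if j = i then 1 else 0) :=
    Finset.sum_congr rfl fun i _ => by rw [φcoord_stdM i j]
  rw [hcongr] at h0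
  simpa using h0

/-! ### Spanning -/

/-- The span of the standard monomials together with `J`. -/
noncomputable def U : Submodule ℂ R2 :=
  Submodule.span ℂ (Set.range stdM) ⊔ (JI.restrictScalars ℂ)

lemma mem_U_of_mem_JI {p : R2} (hp : p ∈ JI) : p ∈ U :=
  Submodule.mem_sup_right hp

lemma mem_U_std (j : Fin 13) : stdM j ∈ U :=
  Submodule.mem_sup_left (Submodule.subset_span ⟨j, rfl⟩)

lemma pow_mem_U (a b : ℕ) : (X 0 : R2) ^ a * X 1 ^ b ∈ U := by
  induction a using Nat.strong_induction_on generalizing b with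
  | _ a ih =>
  rcases le_or_gt 4 b with hb | hb
  · -- b ≥ 4 : multiple of z⁴ ∈ J
    obtain ⟨b', rfl⟩ := Nat.exists_eq_add_of_le hb
    have : (X 0 : R2) ^ a * X 1 ^ (4 + b') = (X 0 ^ a * X 1 ^ b') * X 1 ^ 4 := by ring
    rw [this]
    exact mem_U_of_mem_JI (Ideal.mul_mem_left _ _ X1_pow4_mem)
  · rcases le_or_gt a 2 with ha | ha
    · -- a ≤ 2, b ≤ 3 : standard monomial
      interval_cases a <;> interval_cases b
      · exact mem_U_std 0
      · exact mem_U_std 4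
      · exact mem_U_std 7
      · exact mem_U_std 10
      · exact mem_U_std 1
      · exact mem_U_std 5
      · exact mem_U_std 8
      · exact mem_U_std 11
      · exact mem_U_std 2
      · exact mem_U_std 6
      · exact mem_U_std 9
      · exact mem_U_std 12
    · rcases Nat.eq_zero_or_pos b with rfl | hbpos
      · rcases Nat.lt_or_ge a 4 with ha4 | ha4
        · -- a = 3, b = 0 : standard monomial
          have : a = 3 := by omega
          subst this
          exact mem_U_std 3
        · -- a ≥ 4, b = 0 : reduce with f
          obtain ⟨a', rfl⟩ := Nat.exists_eq_add_of_le ha4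
          have key : (X 0 : R2) ^ (4 + a') * X 1 ^ 0 =
              (X 0 ^ a') * (-fP) + X 0 ^ a' * X 1 ^ 3 - X 0 ^ (3 + a') * X 1 ^ 1
                + X 0 ^ (2 + a') * X 1 ^ 2 - X 0 ^ (1 + a') * X 1 ^ 3 := by
            rw [fP]; ring
          rw [key]
          refine Submodule.sub_mem _ (Submodule.add_mem _ (Submodule.sub_mem _
            (Submodule.add_mem _ ?_ (ih a' (by omega) 3)) (ih (3 + a') (by omega) 1))
            (ih (2 + a') (by omega) 2)) (ih (1 + a') (by omega) 3)
          exact mem_U_of_mem_JI (JI.mul_mem_left _ (JI.neg_mem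
            (Ideal.subset_span (Set.mem_insert _ _))))
      · -- a ≥ 3, b ≥ 1 : reduce with ĝ = (y-1)g - z f
        obtain ⟨a', rfl⟩ := Nat.exists_eq_add_of_le (by omega : 3 ≤ a)
        obtain ⟨b', rfl⟩ := Nat.exists_eq_add_of_le (by omega : 1 ≤ b)
        have hg2 : ((X 0 - 1) * gP - X 1 * fP : R2) ∈ JI := by
          refine Submodule.sub_mem _ ?_ ?_
          · exact JI.mul_mem_left _ (Ideal.subset_span (Set.mem_insert_of_mem _ rfl))
          · exact JI.mul_mem_left _ (Ideal.subset_span (Set.mem_insert _ _))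
        have key : (X 0 : R2) ^ (3 + a') * X 1 ^ (1 + b') =
            (X 0 ^ a' * X 1 ^ b') * ((X 0 - 1) * gP - X 1 * fP)
              - X 0 ^ (2 + a') * X 1 ^ (2 + b') + X 0 ^ (1 + a') * X 1 ^ (3 + b') := by
          rw [fP, gP]; ring
        rw [key]
        refine Submodule.add_mem _ (Submodule.sub_mem _ ?_
          (ih (2 + a') (by omega) (2 + b'))) (ih (1 + a') (by omega) (3 + b'))
        exact mem_U_of_mem_JI (JI.mul_mem_left _ hg2)

lemma U_eq_top : U = ⊤ := by
  rw [eq_top_iff]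
  intro p _
  rw [p.as_sum]
  refine Submodule.sum_mem _ fun v _ => ?_
  have : (monomial v (coeff v p) : R2) = (coeff v p) • (X 0 ^ v 0 * X 1 ^ v 1) := by
    rw [monomial_eq, Finsupp.prod_pow, Fin.prod_univ_two, C_mul']
  rw [this]
  exact Submodule.smul_mem _ _ (pow_mem_U (v 0) (v 1))

lemma span_std_top :
    ⊤ ≤ Submodule.span ℂ (Set.range fun j => Ideal.Quotient.mkₐ ℂ JI (stdM j)) := by
  intro q _
  obtain ⟨p, rfl⟩ := Ideal.Quotient.mkₐ_surjective ℂ JI q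
  have hp : p ∈ U := U_eq_top ▸ Submodule.mem_top
  rw [U, Submodule.mem_sup] at hp
  obtain ⟨s, hs, t, ht, rfl⟩ := hp
  rw [map_add]
  have ht0 : Ideal.Quotient.mkₐ ℂ JI t = 0 := by
    rw [Ideal.Quotient.mkₐ_eq_mk, Ideal.Quotient.eq_zero_iff_mem]
    exact ht
  rw [ht0, add_zero]
  have := Submodule.mem_map_of_mem (f := (Ideal.Quotient.mkₐ ℂ JI).toLinearMap) hs
  rw [Submodule.map_span, ← Set.range_comp] at this
  exact Submodule.span_mono (by rfl) this

/-- The standard monomials give a basis of `ℂ[y,z]/J`. -/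
noncomputable def stdBasis : Module.Basis (Fin 13) ℂ (R2 ⧸ JI) := Module.Basis.mk li_std span_std_top

lemma finrank_quot : Module.finrank ℂ (R2 ⧸ JI) = 13 := by
  rw [Module.finrank_eq_card_basis stdBasis, Fintype.card_fin]


/-! ### Transfer to the local ring `O₀` -/

lemma mem_S0_iff (s : R2) : s ∈ S0 ↔ eval (fun _ => (0 : ℂ)) s ≠ 0 := by
  rw [S0, Submonoid.mem_comap]
  exact mem_nonZeroDivisors_iff_ne_zero

lemma mk_nilpotent_of_constantCoeff_zero {p : R2} (hp : constantCoeff p = 0) :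
    IsNilpotent (Ideal.Quotient.mk JI p) := by
  have hmem : p ∈ Ideal.span (X '' (Set.univ : Set (Fin 2))) := by
    rw [mem_ideal_span_X_image]
    intro m hm
    have hm0 : m ≠ 0 := by
      rintro rfl
      exact (MvPolynomial.mem_support_iff.mp hm) (by rwa [← constantCoeff_eq])
    obtain ⟨i, hi⟩ := Finsupp.ne_iff.mp hm0
    exact ⟨i, Set.mem_univ i, hi⟩
  have hle : Ideal.span (X '' (Set.univ : Set (Fin 2))) ≤
      (nilradical (R2 ⧸ JI)).comap (Ideal.Quotient.mk JI) := by
    rw [Ideal.span_le]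
    rintro _ ⟨i, -, rfl⟩
    rw [SetLike.mem_coe, Ideal.mem_comap, mem_nilradical]
    fin_cases i
    · exact ⟨7, by rw [← map_pow, Ideal.Quotient.eq_zero_iff_mem]; exact X0_pow7_mem⟩
    · exact ⟨4, by rw [← map_pow, Ideal.Quotient.eq_zero_iff_mem]; exact X1_pow4_mem⟩
  exact mem_nilradical.mp (hle hmem)

lemma isUnit_mk_of_S0 (s : R2) (hs : s ∈ S0) : IsUnit (Ideal.Quotient.mk JI s) := by
  set c := eval (fun _ => (0 : ℂ)) s with hc
  have hcne : c ≠ 0 := (mem_S0_iff s).mp hs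
  have hnil : IsNilpotent (Ideal.Quotient.mk JI (s - C c)) := by
    apply mk_nilpotent_of_constantCoeff_zero
    rw [map_sub, constantCoeff_C, ← eval_zero', hc, sub_self]
  have hunit : IsUnit (Ideal.Quotient.mk JI (C c)) :=
    ((isUnit_iff_ne_zero.mpr hcne).map C).map (Ideal.Quotient.mk JI)
  have : Ideal.Quotient.mk JI s
      = Ideal.Quotient.mk JI (C c) + Ideal.Quotient.mk JI (s - C c) := by
    rw [← map_add]; ring_nf
  rw [this]
  exact hnil.isUnit_add_left_of_commute hunit (Commute.all _ _)

noncomputable def ψ0 : O0 →+* R2 ⧸ JI :=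
  IsLocalization.lift (M := S0) (S := O0)
    (g := (Ideal.Quotient.mk JI : R2 →+* R2 ⧸ JI))
    (fun y => isUnit_mk_of_S0 y y.2)

lemma ψ0_algebraMap (p : R2) : ψ0 (algebraMap R2 O0 p) = Ideal.Quotient.mk JI p :=
  IsLocalization.lift_eq _ _

/-- The ideal `(f, g)` in the local ring. -/
def I' : Ideal O0 := Ideal.span {algebraMap R2 O0 fP, algebraMap R2 O0 gP}

lemma I'_le_ker : I' ≤ RingHom.ker ψ0 := by
  rw [I', Ideal.span_le]
  rintro x hx
  simp only [Set.mem_insert_iff, Set.mem_singleton_iff] at hx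
  rcases hx with rfl | rfl <;>
    rw [SetLike.mem_coe, RingHom.mem_ker, ψ0_algebraMap, Ideal.Quotient.eq_zero_iff_mem]
  · exact Ideal.subset_span (Set.mem_insert _ _)
  · exact Ideal.subset_span (Set.mem_insert_of_mem _ rfl)

noncomputable def ψbar : O0 ⧸ I' →+* R2 ⧸ JI :=
  Ideal.Quotient.lift I' ψ0 (fun a ha => RingHom.mem_ker.mp (I'_le_ker ha))

noncomputable def χ0 : R2 ⧸ JI →+* O0 ⧸ I' :=
  Ideal.Quotient.lift JI ((Ideal.Quotient.mk I').comp (algebraMap R2 O0)) (by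
    intro a ha
    rw [RingHom.comp_apply, Ideal.Quotient.eq_zero_iff_mem]
    obtain ⟨u, v, rfl⟩ := Ideal.mem_span_pair.mp ha
    rw [RingHom.map_add, RingHom.map_mul, RingHom.map_mul]
    exact Ideal.add_mem _
      (Ideal.mul_mem_left _ _ (Ideal.subset_span (Set.mem_insert _ _)))
      (Ideal.mul_mem_left _ _ (Ideal.subset_span (Set.mem_insert_of_mem _ rfl))))

lemma key_comp : χ0.comp ψ0 = Ideal.Quotient.mk I' := by
  apply IsLocalization.ringHom_ext S0
  refine RingHom.ext fun p => ?_
  simp only [RingHom.comp_apply, ψ0_algebraMap, χ0, Ideal.Quotient.lift_mk]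

lemma alg_O0I' (c : ℂ) :
    (algebraMap ℂ (O0 ⧸ I') : ℂ →+* (O0 ⧸ I')) c = Ideal.Quotient.mk I' (algebraMap R2 O0 (C c)) := by
  rw [IsScalarTower.algebraMap_apply ℂ O0 (O0 ⧸ I'), Ideal.Quotient.algebraMap_eq,
    IsScalarTower.algebraMap_apply ℂ R2 O0, MvPolynomial.algebraMap_eq]

lemma alg_QJI (c : ℂ) :
    algebraMap ℂ (R2 ⧸ JI) c = Ideal.Quotient.mk JI (C c) := by
  rw [IsScalarTower.algebraMap_apply ℂ R2 (R2 ⧸ JI), Ideal.Quotient.algebraMap_eq,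
    MvPolynomial.algebraMap_eq]

noncomputable def reqv : (O0 ⧸ I') ≃+* (R2 ⧸ JI) where
  toFun := ψbar
  invFun := χ0
  left_inv x := by
    obtain ⟨o, rfl⟩ := Ideal.Quotient.mk_surjective x
    show χ0 (ψbar (Ideal.Quotient.mk I' o)) = Ideal.Quotient.mk I' o
    rw [ψbar, Ideal.Quotient.lift_mk]
    exact RingHom.congr_fun key_comp o
  right_inv q := by
    obtain ⟨p, rfl⟩ := Ideal.Quotient.mk_surjective q
    show ψbar (χ0 (Ideal.Quotient.mk JI p)) = Ideal.Quotient.mk JI p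
    rw [χ0, Ideal.Quotient.lift_mk, RingHom.comp_apply, ψbar, Ideal.Quotient.lift_mk,
      ψ0_algebraMap]
  map_add' := ψbar.map_add
  map_mul' := ψbar.map_mul

noncomputable def aeqv : (O0 ⧸ I') ≃ₐ[ℂ] (R2 ⧸ JI) :=
  AlgEquiv.ofRingEquiv (f := reqv) (fun c => by
    show ψbar ((algebraMap ℂ (O0 ⧸ I') : ℂ →+* (O0 ⧸ I')) c) = algebraMap ℂ (R2 ⧸ JI) c
    rw [alg_O0I', ψbar, Ideal.Quotient.lift_mk, ψ0_algebraMap, alg_QJI])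

lemma interIdx_fP_gP : interIdx fP gP = 13 := by
  rw [interIdx]
  rw [show Ideal.span {algebraMap R2 O0 fP, algebraMap R2 O0 gP} = I' from rfl]
  rw [aeqv.toLinearEquiv.finrank_eq, finrank_quot]


end FolAux

/-- The foliation `X = (y³ + y²z - yz² + z³)∂x + z³∂y` has `[1:0:0]` as its unique
singular point, of multiplicity 3 and Milnor number 13. -/
theorem stmt3 (Xf : VF3)
    (hXf : Xf = ![X 1 ^ 3 + X 1 ^ 2 * X 2 - X 1 * X 2 ^ 2 + X 2 ^ 3,
      X 2 ^ 3, 0]) :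
    UniqueSingE0 Xf ∧ multE0 Xf = 3 ∧ interIdx (locF Xf) (locG Xf) = 13 := by
  refine ⟨FolAux.uniqueSing Xf hXf, FolAux.multE0_eq Xf hXf, ?_⟩
  rw [FolAux.locF_eq Xf hXf, FolAux.locG_eq Xf hXf]
  exact FolAux.interIdx_fP_gP

end
end
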